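/- Let M be a symmetric real p×p matrix, Σ a symmetric positive definite real p×p matrix, Σ^{1/2} the unique symmetric positive definite square root of Σ, and 1 ≤ d ≤ p. Then the supremum of trace(Bᵀ M B) over all real p×d matrices B with Bᵀ Σ B = I_d is attained, and it equals the sum of the d largest eigenvalues (counted with multiplicity) of the symmetric matrix Σ^{-1/2} M Σ^{-1/2}. -/

import Mathlib

open Matrix

private lemma filter_sum_eq {p d : ℕ} (hdp : d ≤ p) (f : Fin p → ℝ) :
    ∑ i ∈ Finset.univ.filter (fun i : Fin p => (i : ℕ) < d), f i
      = ∑ k : Fin d, f (Fin.castLE hdp k) := by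
  have : ∑ k : Fin d, f (Fin.castLE hdp k)
      = ∑ i ∈ Finset.univ.map (Fin.castLEEmb hdp), f i := by
    rw [Finset.sum_map]
    rfl
  rw [this]
  congr 1
  ext i
  simp only [Finset.mem_filter, Finset.mem_univ, true_and, Finset.mem_map, Fin.castLEEmb_apply]
  constructor
  · rintro hi
    exact ⟨⟨(i : ℕ), hi⟩, Fin.ext rfl⟩
  · rintro ⟨k, rfl⟩
    exact k.2

private lemma majorize {p d : ℕ} (hd1 : 1 ≤ d) (hdp : d ≤ p) (μ u : Fin p → ℝ)
    (hμ : Antitone μ) (h0 : ∀ i, 0 ≤ u i) (h1 : ∀ i, u i ≤ 1)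
    (hs : ∑ i, u i = d) :
    ∑ i, μ i * u i ≤ ∑ i ∈ Finset.univ.filter (fun i : Fin p => (i : ℕ) < d), μ i := by
  set t := μ (Fin.castLE hdp ⟨d - 1, by omega⟩) with ht
  have key : ∀ i : Fin p, μ i * u i ≤
      (if (i : ℕ) < d then μ i else 0) + t * (u i - if (i : ℕ) < d then 1 else 0) := by
    intro i
    by_cases hi : (i : ℕ) < d
    · simp only [hi, if_pos]
      have hti : t ≤ μ i := hμ (by simp only [Fin.le_def, Fin.coe_castLE]; omega)
      nlinarith [h1 i]
    · simp only [hi, if_neg, not_false_iff]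
      have hti : μ i ≤ t := hμ (by simp only [Fin.le_def, Fin.coe_castLE]; omega)
      nlinarith [h0 i]
  have hcard : ∑ i : Fin p, (if (i : ℕ) < d then (1 : ℝ) else 0) = d := by
    rw [← Finset.sum_filter, filter_sum_eq hdp]
    simp
  calc ∑ i, μ i * u i
      ≤ ∑ i : Fin p, ((if (i : ℕ) < d then μ i else 0)
          + t * (u i - if (i : ℕ) < d then 1 else 0)) :=
        Finset.sum_le_sum fun i _ => key i
    _ = (∑ i : Fin p, (if (i : ℕ) < d then μ i else 0))
          + t * (∑ i, u i - ∑ i : Fin p, (if (i : ℕ) < d then (1 : ℝ) else 0)) := by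
        rw [Finset.sum_add_distrib, ← Finset.mul_sum, Finset.sum_sub_distrib]
    _ = ∑ i ∈ Finset.univ.filter (fun i : Fin p => (i : ℕ) < d), μ i := by
        rw [hcard, hs, sub_self, mul_zero, add_zero, Finset.sum_filter]

private lemma kyFan {p d : ℕ} (hd1 : 1 ≤ d) (hdp : d ≤ p)
    {N : Matrix (Fin p) (Fin p) ℝ} (hN : N.IsHermitian)
    (e : Equiv.Perm (Fin p)) (he : Antitone (hN.eigenvalues ∘ e))
    (C : Matrix (Fin p) (Fin d) ℝ) (hC : Cᵀ * C = 1) :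
    (Cᵀ * N * C).trace
      ≤ ∑ i ∈ Finset.univ.filter (fun i : Fin p => (i : ℕ) < d), hN.eigenvalues (e i) := by
  set U : Matrix (Fin p) (Fin p) ℝ := (hN.eigenvectorUnitary : Matrix (Fin p) (Fin p) ℝ) with hU
  have hU1 : Uᵀ * U = 1 := by
    have := (Matrix.mem_unitaryGroup_iff'.mp hN.eigenvectorUnitary.2)
    simpa [Matrix.star_eq_conjTranspose, Matrix.conjTranspose_eq_transpose_of_trivial] using this
  have hU2 : U * Uᵀ = 1 := by
    have := (Matrix.mem_unitaryGroup_iff.mp hN.eigenvectorUnitary.2)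
    simpa [Matrix.star_eq_conjTranspose, Matrix.conjTranspose_eq_transpose_of_trivial] using this
  have hspec : N = U * Matrix.diagonal hN.eigenvalues * Uᵀ := by
    have := hN.spectral_theorem
    simpa [Matrix.star_eq_conjTranspose, Matrix.conjTranspose_eq_transpose_of_trivial,
      RCLike.ofReal_real_eq_id] using this
  set P : Matrix (Fin p) (Fin d) ℝ := Uᵀ * C with hPdef
  have hPP : Pᵀ * P = 1 := by
    have h1 : Pᵀ * P = Cᵀ * (U * Uᵀ) * C := by
      simp only [hPdef, Matrix.transpose_mul, Matrix.transpose_transpose, Matrix.mul_assoc]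
    rw [h1, hU2, Matrix.mul_one, hC]
  set Q : Matrix (Fin p) (Fin p) ℝ := P * Pᵀ with hQdef
  have hQQ : Q * Q = Q := by
    have h1 : Q * Q = P * (Pᵀ * P) * Pᵀ := by simp only [hQdef, Matrix.mul_assoc]
    rw [h1, hPP, Matrix.mul_one]
  have hQsymm : Qᵀ = Q := by
    simp only [hQdef, Matrix.transpose_mul, Matrix.transpose_transpose]
  set u : Fin p → ℝ := fun i => Q i i with hu
  have hu0 : ∀ i, 0 ≤ u i := by
    intro i
    simp only [hu, hQdef, Matrix.mul_apply, Matrix.transpose_apply]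
    exact Finset.sum_nonneg fun k _ => mul_self_nonneg _
  have hu1 : ∀ i, u i ≤ 1 := by
    intro i
    have h1 : Q i i = ∑ j, Q i j * Q i j := by
      conv_lhs => rw [← hQQ]
      rw [Matrix.mul_apply]
      refine Finset.sum_congr rfl fun j _ => ?_
      rw [show Q j i = Qᵀ i j from rfl, hQsymm]
    have h2 : Q i i * Q i i ≤ ∑ j, Q i j * Q i j :=
      Finset.single_le_sum (f := fun j => Q i j * Q i j)
        (fun j _ => mul_self_nonneg _) (Finset.mem_univ i)
    have h3 : Q i i * Q i i ≤ Q i i := by rw [h1] at h2 ⊢; exact h2.trans_eq rfl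
    nlinarith [hu0 i]
  have husum : ∑ i, u i = d := by
    have h1 : ∑ i, u i = Q.trace := by simp [Matrix.trace, Matrix.diag, hu]
    rw [h1, hQdef, Matrix.trace_mul_comm, hPP, Matrix.trace_one]
    simp
  have htr : (Cᵀ * N * C).trace = ∑ i, hN.eigenvalues i * u i := by
    have h1 : Cᵀ * N * C = Pᵀ * (Matrix.diagonal hN.eigenvalues) * P := by
      conv_lhs => rw [hspec]
      rw [hPdef]
      simp only [Matrix.transpose_mul, Matrix.transpose_transpose, Matrix.mul_assoc]
    rw [h1, Matrix.mul_assoc, Matrix.trace_mul_comm, Matrix.mul_assoc, ← hQdef]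
    simp only [Matrix.trace, Matrix.diag, Matrix.mul_apply, Matrix.diagonal_apply, ite_mul,
      zero_mul, Finset.sum_ite_eq, Finset.mem_univ, if_true]
    rfl
  rw [htr]
  have hre : ∑ i, hN.eigenvalues i * u i
      = ∑ i, (hN.eigenvalues ∘ e) i * (u ∘ e) i :=
    (Equiv.sum_comp e (fun i => hN.eigenvalues i * u i)).symm
  rw [hre]
  exact majorize hd1 hdp _ _ he (fun i => hu0 _) (fun i => hu1 _)
    ((Equiv.sum_comp e u).trans husum)

/-- The supremum of `trace(Bᵀ M B)` over `p×d` matrices `B` with `Bᵀ Σ B = I_d`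
is attained and equals the sum of the `d` largest eigenvalues (with
multiplicity) of `Σ^{-1/2} M Σ^{-1/2}`, the eigenvalues being listed in
decreasing order via a permutation `e`. -/
theorem trace_rayleigh_generalized {p d : ℕ} (hd1 : 1 ≤ d) (hdp : d ≤ p)
    (M S : Matrix (Fin p) (Fin p) ℝ) (hM : M.IsSymm) (hS : S.PosDef)
    (sq : Matrix (Fin p) (Fin p) ℝ) (hsqPD : sq.PosDef) (hsq : sq * sq = S)
    (hN : (sq⁻¹ * M * sq⁻¹).IsHermitian)
    (e : Equiv.Perm (Fin p)) (he : Antitone (hN.eigenvalues ∘ e)) :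
    IsGreatest
      {r : ℝ | ∃ B : Matrix (Fin p) (Fin d) ℝ, Bᵀ * S * B = 1 ∧ r = (Bᵀ * M * B).trace}
      (∑ i ∈ Finset.univ.filter (fun i : Fin p => (i : ℕ) < d), hN.eigenvalues (e i)) := by
  have hdet : IsUnit sq.det := isUnit_iff_ne_zero.mpr hsqPD.det_pos.ne'
  have hinv1 : sq⁻¹ * sq = 1 := Matrix.nonsing_inv_mul sq hdet
  have hinv2 : sq * sq⁻¹ = 1 := Matrix.mul_nonsing_inv sq hdet
  have hsqsymm : sqᵀ = sq := by
    have h := hsqPD.isHermitian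
    rwa [Matrix.IsHermitian, Matrix.conjTranspose_eq_transpose_of_trivial] at h
  have hinvsymm : (sq⁻¹)ᵀ = sq⁻¹ := by
    rw [Matrix.transpose_nonsing_inv, hsqsymm]
  constructor
  · -- membership: construct an optimal B
    set U : Matrix (Fin p) (Fin p) ℝ :=
      (hN.eigenvectorUnitary : Matrix (Fin p) (Fin p) ℝ) with hU
    have hU1 : Uᵀ * U = 1 := by
      have h := (Matrix.mem_unitaryGroup_iff'.mp hN.eigenvectorUnitary.2)
      simpa [Matrix.star_eq_conjTranspose,
        Matrix.conjTranspose_eq_transpose_of_trivial] using h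
    have hU2 : U * Uᵀ = 1 := by
      have h := (Matrix.mem_unitaryGroup_iff.mp hN.eigenvectorUnitary.2)
      simpa [Matrix.star_eq_conjTranspose,
        Matrix.conjTranspose_eq_transpose_of_trivial] using h
    have hspec : sq⁻¹ * M * sq⁻¹ = U * Matrix.diagonal hN.eigenvalues * Uᵀ := by
      have h := hN.spectral_theorem
      simpa [Matrix.star_eq_conjTranspose, Matrix.conjTranspose_eq_transpose_of_trivial,
        RCLike.ofReal_real_eq_id] using h
    set f : Fin d → Fin p := fun k => e (Fin.castLE hdp k) with hf
    set C : Matrix (Fin p) (Fin d) ℝ := Matrix.of (fun j k => U j (f k)) with hCdef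
    have hUU : ∀ a b : Fin p, ∑ j, U j a * U j b = if a = b then (1 : ℝ) else 0 := by
      intro a b
      have h := congrFun (congrFun hU1 a) b
      rw [Matrix.mul_apply] at h
      simp only [Matrix.transpose_apply] at h
      rw [h, Matrix.one_apply]
    have hCC : Cᵀ * C = 1 := by
      ext k k'
      rw [Matrix.mul_apply]
      simp only [Matrix.transpose_apply, hCdef, Matrix.of_apply]
      rw [hUU (f k) (f k')]
      simp only [hf, Matrix.one_apply]
      congr 1
      simp [e.injective.eq_iff, Fin.castLE_inj, eq_iff_iff]
    refine ⟨sq⁻¹ * C, ?_, ?_⟩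
    · -- constraint
      have hmid : sq⁻¹ * S * sq⁻¹ = 1 := by
        rw [← hsq]
        have h : sq⁻¹ * (sq * sq) * sq⁻¹ = sq⁻¹ * sq * (sq * sq⁻¹) := by
          simp only [Matrix.mul_assoc]
        rw [h, hinv1, hinv2, one_mul]
      rw [Matrix.transpose_mul, hinvsymm]
      have h : Cᵀ * sq⁻¹ * S * (sq⁻¹ * C) = Cᵀ * (sq⁻¹ * S * sq⁻¹) * C := by
        simp only [Matrix.mul_assoc]
      rw [h, hmid, Matrix.mul_one, hCC]
    · -- value
      have hBM : (sq⁻¹ * C)ᵀ * M * (sq⁻¹ * C) = Cᵀ * (sq⁻¹ * M * sq⁻¹) * C := by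
        rw [Matrix.transpose_mul, hinvsymm]
        simp only [Matrix.mul_assoc]
      rw [hBM]
      have hNU : (sq⁻¹ * M * sq⁻¹) * U = U * Matrix.diagonal hN.eigenvalues := by
        conv_lhs => rw [hspec]
        have h : U * Matrix.diagonal hN.eigenvalues * Uᵀ * U
            = U * Matrix.diagonal hN.eigenvalues * (Uᵀ * U) := by
          simp only [Matrix.mul_assoc]
        rw [h, hU1, Matrix.mul_one]
      have hNC : ∀ j k, ((sq⁻¹ * M * sq⁻¹) * C) j k = U j (f k) * hN.eigenvalues (f k) := by
        intro j k
        have h1 : ((sq⁻¹ * M * sq⁻¹) * C) j k = ((sq⁻¹ * M * sq⁻¹) * U) j (f k) := by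
          simp [Matrix.mul_apply, hCdef]
        rw [h1, hNU, Matrix.mul_diagonal]
      have htrval : (Cᵀ * (sq⁻¹ * M * sq⁻¹) * C).trace
          = ∑ k : Fin d, hN.eigenvalues (f k) := by
        rw [Matrix.mul_assoc, Matrix.trace]
        simp only [Matrix.diag, Matrix.mul_apply, Matrix.transpose_apply]
        refine Finset.sum_congr rfl fun k _ => ?_
        calc ∑ j, C j k * ((sq⁻¹ * M * sq⁻¹) * C) j k
            = ∑ j, U j (f k) * U j (f k) * hN.eigenvalues (f k) := by
              refine Finset.sum_congr rfl fun j _ => ?_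
              rw [hNC j k]
              simp only [hCdef, Matrix.of_apply]
              ring
          _ = (∑ j, U j (f k) * U j (f k)) * hN.eigenvalues (f k) := by
              rw [Finset.sum_mul]
          _ = hN.eigenvalues (f k) := by rw [hUU (f k) (f k)]; simp
      rw [htrval, filter_sum_eq hdp (fun i => hN.eigenvalues (e i))]
  · -- upper bound
    rintro r ⟨B, hB, rfl⟩
    set C : Matrix (Fin p) (Fin d) ℝ := sq * B with hCdef
    have hCT : Cᵀ = Bᵀ * sq := by rw [hCdef, Matrix.transpose_mul, hsqsymm]
    have hCC : Cᵀ * C = 1 := by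
      rw [hCT, hCdef]
      have h : Bᵀ * sq * (sq * B) = Bᵀ * (sq * sq) * B := by
        simp only [Matrix.mul_assoc]
      rw [h, hsq, hB]
    have hMB : Cᵀ * (sq⁻¹ * M * sq⁻¹) * C = Bᵀ * M * B := by
      rw [hCT, hCdef]
      have h : Bᵀ * sq * (sq⁻¹ * M * sq⁻¹) * (sq * B)
          = Bᵀ * (sq * sq⁻¹) * M * (sq⁻¹ * sq) * B := by
        simp only [Matrix.mul_assoc]
      rw [h, hinv1, hinv2, Matrix.mul_one, Matrix.mul_one]
    calc (Bᵀ * M * B).trace = (Cᵀ * (sq⁻¹ * M * sq⁻¹) * C).trace := by rw [hMB]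
      _ ≤ _ := kyFan hd1 hdp hN e he C hCC
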